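/- A single increase that keeps the sorted order yields domination for LPT: if x' differs from x only at index j where x'_j = x_j + ε with ε > 0, and the nonincreasing sorted orders of x and x' agree (the increased element stays in the same sorted position), then the bin-sum vector of LPT(x', m) dominates that of LPT(x, m). -/

import Mathlib

open scoped Classical

/-- The bin chosen by List Scheduling: the smallest-index bin with minimal current sum. -/
noncomputable def lsIndex {m : ℕ} (hm : 0 < m) (v : Fin m → ℝ) : Fin m :=
  (Finset.univ.filter fun i => ∀ j, v i ≤ v j).min' (by
    obtain ⟨i, -, hi⟩ := Finset.exists_min_image Finset.univ v ⟨⟨0, hm⟩, Finset.mem_univ _⟩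
    exact ⟨i, Finset.mem_filter.mpr ⟨Finset.mem_univ _, fun j => hi j (Finset.mem_univ _)⟩⟩)

/-- One step of List Scheduling: place `x` into the chosen bin. -/
noncomputable def lsStep {m : ℕ} (hm : 0 < m) (v : Fin m → ℝ) (x : ℝ) : Fin m → ℝ :=
  Function.update v (lsIndex hm v) (v (lsIndex hm v) + x)

/-- The vector of bin sums after List Scheduling processes the list `xs` into `m` bins. -/
noncomputable def lsSums {m : ℕ} (hm : 0 < m) (xs : List ℝ) : Fin m → ℝ :=
  xs.foldl (lsStep hm) (fun _ => 0)

/-- `s` dominates `t` iff some permutation `π` satisfies `s (π i) ≥ t i` for all `i`. -/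
def Dominates {m : ℕ} (s t : Fin m → ℝ) : Prop :=
  ∃ π : Equiv.Perm (Fin m), ∀ i, t i ≤ s (π i)


/-- Sort a list of reals in nonincreasing order. -/
noncomputable def sortDesc (xs : List ℝ) : List ℝ :=
  xs.mergeSort (fun a b => decide (b ≤ a))

/-- The bin sums produced by the Longest Processing Time (LPT) algorithm:
sort the inputs in nonincreasing order, then run List Scheduling. -/
noncomputable def lptSums {m : ℕ} (hm : 0 < m) (xs : List ℝ) : Fin m → ℝ :=
  lsSums hm (sortDesc xs)

lemma lsIndex_min {m : ℕ} (hm : 0 < m) (v : Fin m → ℝ) : ∀ j, v (lsIndex hm v) ≤ v j := by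
  have := Finset.min'_mem (Finset.univ.filter fun i => ∀ j, v i ≤ v j) (by
    obtain ⟨i, -, hi⟩ := Finset.exists_min_image Finset.univ v ⟨⟨0, hm⟩, Finset.mem_univ _⟩
    exact ⟨i, Finset.mem_filter.mpr ⟨Finset.mem_univ _, fun j => hi j (Finset.mem_univ _)⟩⟩)
  exact (Finset.mem_filter.mp this).2

lemma lsStep_apply {m : ℕ} (hm : 0 < m) (v : Fin m → ℝ) (x : ℝ) (i : Fin m) :
    lsStep hm v x i = if i = lsIndex hm v then v i + x else v i := by
  by_cases h : i = lsIndex hm v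
  · subst h; simp [lsStep]
  · simp [lsStep, Function.update_of_ne h, h]

lemma dominates_lsStep {m : ℕ} (hm : 0 < m) {s t : Fin m → ℝ} {a b : ℝ} (hab : b ≤ a)
    (h : Dominates s t) : Dominates (lsStep hm s a) (lsStep hm t b) := by
  obtain ⟨π, hπ⟩ := h
  have hsp : ∀ i, s (lsIndex hm s) ≤ s i := lsIndex_min hm s
  have htq : ∀ i, t (lsIndex hm t) ≤ t i := lsIndex_min hm t
  by_cases hc : π (lsIndex hm t) = lsIndex hm s
  · refine ⟨π, fun i => ?_⟩
    rw [lsStep_apply, lsStep_apply]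
    by_cases hi : i = lsIndex hm t
    · rw [if_pos hi, if_pos (by rw [hi, hc])]
      have h1 := hπ i
      have h2 : s (π i) ≤ s (π i) := le_refl _
      have h3 : s (lsIndex hm s) ≤ s (π i) := hsp _
      linarith
    · have hne : π i ≠ lsIndex hm s := fun hh => hi (π.injective (hh.trans hc.symm))
      rw [if_neg hne, if_neg hi]; exact hπ i
  · set r := π.symm (lsIndex hm s) with hr
    have hπr : π r = lsIndex hm s := π.apply_symm_apply _
    have hrq : r ≠ lsIndex hm t := fun hh => hc (hh ▸ hπr)
    have hspr : t r ≤ s (lsIndex hm s) := by have := hπ r; rwa [hπr] at this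
    refine ⟨π * Equiv.swap (lsIndex hm t) r, fun i => ?_⟩
    simp only [Equiv.Perm.mul_apply]
    rw [lsStep_apply, lsStep_apply]
    by_cases hiq : i = lsIndex hm t
    · rw [hiq, Equiv.swap_apply_left, hπr, if_pos rfl, if_pos rfl]
      have : t (lsIndex hm t) ≤ s (lsIndex hm s) := le_trans (htq r) hspr
      linarith
    · by_cases hir : i = r
      · rw [hir, Equiv.swap_apply_right, if_neg hc, if_neg hrq]
        exact le_trans hspr (hsp _)
      · rw [Equiv.swap_apply_of_ne_of_ne hiq hir, if_neg hiq]
        have hne : π i ≠ lsIndex hm s := fun hh => hir (by rw [hr, ← hh, Equiv.symm_apply_apply])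
        rw [if_neg hne]
        exact hπ i
lemma dominates_foldl {m : ℕ} (hm : 0 < m) {ys zs : List ℝ}
    (hf : List.Forall₂ (fun a b => b ≤ a) ys zs) :
    ∀ {s t : Fin m → ℝ}, Dominates s t →
      Dominates (ys.foldl (lsStep hm) s) (zs.foldl (lsStep hm) t) := by
  induction hf with
  | nil => intro s t h; exact h
  | cons hab _ ih => intro s t h; exact ih (dominates_lsStep hm hab h)

lemma forall₂_set {l : List ℝ} {k : ℕ} {v w : ℝ} (h : l[k]? = some v) (hvw : v ≤ w) :
    List.Forall₂ (fun a b => b ≤ a) (l.set k w) l := by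
  induction l generalizing k with
  | nil => simp at h
  | cons hd tl ih =>
    cases k with
    | zero =>
      simp only [List.getElem?_cons_zero] at h
      injection h with h; subst h
      exact List.Forall₂.cons hvw (List.forall₂_same.mpr fun a _ => le_refl a)
    | succ k =>
      simp only [List.set]
      exact List.Forall₂.cons (le_refl hd) (ih (by simpa using h))

/-- A single increase that keeps the sorted order yields domination for LPT:
if `x'` differs from `x` only at index `j` where it is larger by `ε > 0`, and the
nonincreasing sorted order of `x'` is obtained from that of `x` by replacing the
occurrence of `x j` (at its sorted position `k`) by `x j + ε`, then the bin-sum vector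
of LPT on `x'` dominates that of LPT on `x`. -/
theorem lpt_single_increase_same_order_dominates {m n : ℕ} (hm : 2 ≤ m) (x : Fin n → ℝ)
    (hpos : ∀ i, 0 < x i) (j : Fin n) (ε : ℝ) (hε : 0 < ε) (k : ℕ)
    (hk : (sortDesc (List.ofFn x))[k]? = some (x j))
    (hsort : sortDesc (List.ofFn (Function.update x j (x j + ε))) =
      (sortDesc (List.ofFn x)).set k (x j + ε)) :
    Dominates (lptSums (by omega : 0 < m) (List.ofFn (Function.update x j (x j + ε))))
      (lptSums (by omega : 0 < m) (List.ofFn x)) := by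
  unfold lptSums lsSums
  refine dominates_foldl _ ?_ ⟨1, fun i => le_refl _⟩
  rw [hsort]
  exact forall₂_set hk (by linarith)
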